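/- Every finite graph G1 has a spanning subgraph G1' such that for every vertex v, the degree of v in G1' lies in the interval [(9/16)·d_{G1}(v) − 3, (9/16)·d_{G1}(v) + 3]. -/

import Mathlib

open scoped Classical

namespace Stmt1Helper

open SimpleGraph Walk

variable {V : Type*}

/-- Count of edges in a list incident to a vertex. -/
noncomputable def lcnt (v : V) (l : List (Sym2 V)) : ℕ := l.countP (fun e => v ∈ e)

@[simp] lemma lcnt_nil (v : V) : lcnt v ([] : List (Sym2 V)) = 0 := rfl

lemma lcnt_cons (v : V) (e : Sym2 V) (l : List (Sym2 V)) :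
    lcnt v (e :: l) = lcnt v l + (if v ∈ e then 1 else 0) := by
  simp [lcnt, List.countP_cons]

/-- Alternate selection of the edges of a walk, starting from the last edge. -/
noncomputable def pick {G : SimpleGraph V} : {u w : V} → G.Walk u w → List (Sym2 V)
  | _, _, .nil => []
  | _, _, .cons (u := u) (v := x) _ .nil => [s(u, x)]
  | _, _, .cons (u := u) (v := x) _ (.cons (v := y) h' q) =>
      if s(x, y) ∈ pick (Walk.cons h' q) then pick (Walk.cons h' q)
      else s(u, x) :: pick (Walk.cons h' q)

theorem pick_sublist {G : SimpleGraph V} : ∀ {u w : V} (p : G.Walk u w),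
    (pick p).Sublist p.edges
  | _, _, .nil => by simp [pick]
  | _, _, .cons _ .nil => by simp [pick]
  | _, _, .cons (u := u) (v := x) h (.cons (v := y) h' q) => by
      rw [pick]
      split
      · exact (pick_sublist (Walk.cons h' q)).trans (List.sublist_cons_self _ _)
      · simpa [Walk.edges_cons] using (pick_sublist (Walk.cons h' q)).cons₂ s(u, x)

theorem pick_spec {G : SimpleGraph V} : ∀ {u x w : V} (h : G.Adj u x) (q : G.Walk x w),
    (Walk.cons h q).IsTrail → ∀ v : V,
    2 * (lcnt v (pick (Walk.cons h q)) : ℤ) - (lcnt v (Walk.cons h q).edges : ℤ)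
      = (if v = w then 1 else 0)
        + (if v = u then (if s(u, x) ∈ pick (Walk.cons h q) then (1 : ℤ) else -1) else 0)
  | u, x, _, h, .nil, ht, v => by
      have hux : u ≠ x := h.ne
      rw [pick]
      simp only [Walk.edges_cons, Walk.edges_nil, lcnt_cons, lcnt_nil, List.mem_singleton]
      by_cases hvu : v = u <;> by_cases hvx : v = x <;>
        simp [hvu, hvx, Sym2.mem_iff, hux, Ne.symm hux] <;> omega
  | u, x, w, h, .cons (v := y) h' q, ht, v => by
      have hq : (Walk.cons h' q).IsTrail := ht.of_cons
      have hnotmem : s(u, x) ∉ (Walk.cons h' q).edges :=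
        ((Walk.isTrail_cons h (Walk.cons h' q)).mp ht).2
      have hnotpick : s(u, x) ∉ pick (Walk.cons h' q) :=
        fun hm => hnotmem ((pick_sublist (Walk.cons h' q)).subset hm)
      have ih := pick_spec h' q hq v
      have hux : u ≠ x := h.ne
      rw [pick]
      by_cases hc : s(x, y) ∈ pick (Walk.cons h' q)
      · rw [if_pos hc]
        rw [if_pos hc] at ih
        simp only [Walk.edges_cons, lcnt_cons, if_neg hnotpick]
        rw [Walk.edges_cons] at ih
        rw [lcnt_cons] at ih
        by_cases hvu : v = u <;> by_cases hvx : v = x <;> by_cases hvw : v = w <;>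
          simp only [hvu, hvx, hvw, Sym2.mem_iff, if_true, if_false, eq_self_iff_true,
            true_or, or_true] at ih ⊢ <;>
          simp_all [Sym2.mem_iff, hux, Ne.symm hux] <;> omega
      · rw [if_neg hc]
        rw [if_neg hc] at ih
        have hmem : s(u, x) ∈ s(u, x) :: pick (Walk.cons h' q) := List.mem_cons_self
        simp only [Walk.edges_cons, lcnt_cons, if_pos hmem]
        rw [Walk.edges_cons] at ih
        rw [lcnt_cons] at ih
        by_cases hvu : v = u <;> by_cases hvx : v = x <;> by_cases hvw : v = w <;>
          simp only [hvu, hvx, hvw, Sym2.mem_iff, if_true, if_false, eq_self_iff_true,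
            true_or, or_true] at ih ⊢ <;>
          simp_all [Sym2.mem_iff, hux, Ne.symm hux] <;> omega


theorem exists_max_trail [Fintype V] {G : SimpleGraph V} (hne : G.edgeSet.Nonempty) :
    ∃ (u w : V) (p : G.Walk u w), p.IsTrail ∧ ¬p.Nil ∧
      (∀ z, G.Adj u z → s(u, z) ∈ p.edges) ∧ (∀ z, G.Adj w z → s(w, z) ∈ p.edges) := by
  haveI : Fintype G.edgeSet := Fintype.ofFinite _
  set M := G.edgeFinset.card with hM
  set P : ℕ → Prop := fun n => ∃ (u w : V) (p : G.Walk u w), p.IsTrail ∧ p.length = n with hP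
  have hbound : ∀ n, P n → n ≤ M := by
    rintro n ⟨u, w, p, hp, rfl⟩
    calc p.length = p.edges.length := (Walk.length_edges p).symm
      _ = p.edges.toFinset.card := by
          rw [List.card_toFinset, List.dedup_eq_self.mpr hp.edges_nodup]
      _ ≤ M := Finset.card_le_card (fun e he =>
          mem_edgeFinset.mpr (p.edges_subset_edgeSet (List.mem_toFinset.mp he)))
  have hP1 : P 1 := by
    obtain ⟨e, he⟩ := hne
    induction e with
    | _ a b =>
      exact ⟨a, b, Walk.cons he Walk.nil, by rw [Walk.isTrail_def]; exact List.nodup_singleton _, rfl⟩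
  have h1M : 1 ≤ M := hbound 1 hP1
  set N := Nat.findGreatest P M with hN
  have hN1 : 1 ≤ N := Nat.le_findGreatest h1M hP1
  obtain ⟨u, w, p, hp, hlen⟩ : P N := Nat.findGreatest_spec h1M hP1
  have hmax : ∀ m, N < m → m ≤ M → ¬ P m := fun m h1 h2 =>
    Nat.findGreatest_is_greatest (hN ▸ h1) h2
  refine ⟨u, w, p, hp, ?_, ?_, ?_⟩
  · intro hnil
    rw [Walk.nil_iff_length_eq] at hnil
    omega
  · intro z hz
    by_contra hmem
    have hP' : P (N + 1) := by
      refine ⟨z, w, Walk.cons hz.symm p, ?_, by simp [hlen]⟩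
      rw [Walk.isTrail_cons]
      exact ⟨hp, by rwa [Sym2.eq_swap]⟩
    exact hmax (N + 1) (Nat.lt_succ_self N) (hbound _ hP') hP'
  · intro z hz
    by_contra hmem
    have hP' : P (N + 1) := by
      refine ⟨u, z, p.concat hz, ?_, by simp [hlen]⟩
      rw [Walk.isTrail_def, Walk.edges_concat]
      simp [List.nodup_append, hp.edges_nodup, hmem]
      exact fun a ha h => hmem (h ▸ ha)
    exact hmax (N + 1) (Nat.lt_succ_self N) (hbound _ hP') hP'

/-- Count of edges in a finset incident to a vertex. -/
noncomputable def ecnt (v : V) (S : Finset (Sym2 V)) : ℕ := (S.filter (fun e => v ∈ e)).card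

lemma ecnt_toFinset (v : V) {l : List (Sym2 V)} (hl : l.Nodup) :
    ecnt v l.toFinset = lcnt v l := by
  rw [ecnt, lcnt]
  have h1 : l.toFinset.filter (fun e => v ∈ e)
      = (l.filter (fun e => v ∈ e)).toFinset := by
    rw [List.toFinset_filter]
    apply Finset.filter_congr
    intro e _
    simp
  rw [h1, List.card_toFinset, List.dedup_eq_self.mpr (hl.filter _),
    List.countP_eq_length_filter]

lemma ecnt_union_of_disjoint (v : V) {A B : Finset (Sym2 V)} (h : Disjoint A B) :
    ecnt v (A ∪ B) = ecnt v A + ecnt v B := by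
  rw [ecnt, ecnt, ecnt, Finset.filter_union,
    Finset.card_union_of_disjoint (Finset.disjoint_filter_filter h)]

lemma ecnt_mono (v : V) {A B : Finset (Sym2 V)} (h : A ⊆ B) : ecnt v A ≤ ecnt v B :=
  Finset.card_le_card (Finset.filter_subset_filter _ h)


theorem half_edges [Fintype V] : ∀ (S : Finset (Sym2 V)), (∀ e ∈ S, ¬ e.IsDiag) →
    ∃ T ⊆ S, ∀ v : V, 2 * ecnt v T ≤ ecnt v S + 2 ∧ ecnt v S ≤ 2 * ecnt v T + 2 := by
  intro S
  induction S using Finset.strongInduction with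
  | _ S ih =>
    intro hd
    rcases S.eq_empty_or_nonempty with rfl | hSne
    · exact ⟨∅, Finset.Subset.refl _, fun v => by simp [ecnt]⟩
    set G : SimpleGraph V := SimpleGraph.fromEdgeSet ↑S with hG
    have hES : G.edgeSet = ↑S := by
      rw [hG, SimpleGraph.edgeSet_fromEdgeSet]
      ext e
      simp only [Set.mem_diff, Finset.mem_coe, Set.mem_setOf_eq, and_iff_left_iff_imp]
      exact fun he => hd e he
    have hne : G.edgeSet.Nonempty := by
      rw [hES]
      exact_mod_cast hSne
    obtain ⟨u, w, p, htr, hnil, hu, hw⟩ := exists_max_trail hne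
    cases p with
    | nil => simp at hnil
    | cons hadj q =>
      set pp := Walk.cons hadj q with hpp
      set l : List (Sym2 V) := pp.edges with hl
      set pk : List (Sym2 V) := pick pp with hpk
      have hlsub : ∀ e ∈ l, e ∈ S := by
        intro e he
        have := pp.edges_subset_edgeSet he
        rwa [hES, Finset.mem_coe] at this
      set Pe : Finset (Sym2 V) := l.toFinset with hPe
      have hPeS : Pe ⊆ S := fun e he => hlsub e (List.mem_toFinset.mp he)
      have hPene : Pe.Nonempty := by
        refine ⟨l.head ?_, List.mem_toFinset.mpr (List.head_mem _)⟩
        simp [hl, hpp, Walk.edges_cons]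
      set S' : Finset (Sym2 V) := S \ Pe with hS'
      obtain ⟨T', hT'S', hT'⟩ := ih S' (Finset.sdiff_ssubset hPeS hPene)
        (fun e he => hd e (Finset.mem_sdiff.mp he).1)
      have hpknd : pk.Nodup := (pick_sublist pp).nodup htr.edges_nodup
      have hpkPe : pk.toFinset ⊆ Pe := by
        intro e he
        exact List.mem_toFinset.mpr ((pick_sublist pp).subset (List.mem_toFinset.mp he))
      refine ⟨T' ∪ pk.toFinset, ?_, ?_⟩
      · exact Finset.union_subset (hT'S'.trans (Finset.sdiff_subset))
          (hpkPe.trans hPeS)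
      intro v
      have hdisjT : Disjoint T' pk.toFinset :=
        (Finset.sdiff_disjoint.mono hT'S' hpkPe : Disjoint T' pk.toFinset)
      have hecT : ecnt v (T' ∪ pk.toFinset) = ecnt v T' + lcnt v pk := by
        rw [ecnt_union_of_disjoint v hdisjT, ecnt_toFinset v hpknd]
      have hecS : ecnt v S = ecnt v S' + lcnt v l := by
        rw [← ecnt_toFinset v htr.edges_nodup, ← hPe,
          ← ecnt_union_of_disjoint v Finset.sdiff_disjoint, Finset.sdiff_union_of_subset hPeS]
      have spec := pick_spec hadj q htr v
      rw [← hpp, ← hpk, ← hl] at spec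
      rw [hecT, hecS]
      by_cases hvuw : v = u ∨ v = w
      · have hS'0 : ecnt v S' = 0 := by
          rw [ecnt, Finset.card_eq_zero, Finset.filter_eq_empty_iff]
          rintro e he hv
          obtain ⟨z, rfl⟩ := Sym2.mem_iff_exists.mp hv
          rw [hS', Finset.mem_sdiff] at he
          have hadj' : G.Adj v z := by
            rw [← SimpleGraph.mem_edgeSet, hES, Finset.mem_coe]
            exact he.1
          have hmem : s(v, z) ∈ l := by
            rcases hvuw with rfl | rfl
            · exact hu z hadj'
            · exact hw z hadj'
          exact he.2 (List.mem_toFinset.mpr hmem)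
        have hT'0 : ecnt v T' = 0 :=
          Nat.le_zero.mp (hS'0 ▸ ecnt_mono v hT'S')
        rw [hS'0, hT'0]
        constructor <;> (split_ifs at spec <;> omega)
      · push_neg at hvuw
        rw [if_neg hvuw.2, if_neg hvuw.1] at spec
        norm_num at spec
        have h1 := (hT' v).1
        have h2 := (hT' v).2
        constructor <;> omega


lemma degree_eq_ecnt [Fintype V] (G : SimpleGraph V) (v : V) [Fintype G.edgeSet]
    [Fintype (G.neighborSet v)] :
    G.degree v = ecnt v G.edgeFinset := by
  rw [← SimpleGraph.card_incidenceFinset_eq_degree, SimpleGraph.incidenceFinset_eq_filter, ecnt]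

theorem halfG [Fintype V] (G : SimpleGraph V) :
    ∃ H, H ≤ G ∧ ∀ v : V, 2 * H.degree v ≤ G.degree v + 2 ∧ G.degree v ≤ 2 * H.degree v + 2 := by
  obtain ⟨T, hTS, hT⟩ := half_edges G.edgeFinset
    (fun e he => G.not_isDiag_of_mem_edgeSet (SimpleGraph.mem_edgeFinset.mp he))
  refine ⟨SimpleGraph.fromEdgeSet ↑T, ?_, ?_⟩
  · calc SimpleGraph.fromEdgeSet (↑T : Set (Sym2 V)) ≤ SimpleGraph.fromEdgeSet ↑G.edgeFinset :=
        SimpleGraph.fromEdgeSet_mono (Finset.coe_subset.mpr hTS)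
      _ = G := by rw [SimpleGraph.coe_edgeFinset, SimpleGraph.fromEdgeSet_edgeSet]
  · intro v
    have hEF : ∀ (inst : Fintype (SimpleGraph.fromEdgeSet (↑T : Set (Sym2 V))).edgeSet),
        @SimpleGraph.edgeFinset V (SimpleGraph.fromEdgeSet (↑T : Set (Sym2 V))) inst = T := by
      intro inst
      ext e
      rw [SimpleGraph.mem_edgeFinset, SimpleGraph.edgeSet_fromEdgeSet]
      simp only [Set.mem_diff, Finset.mem_coe, Set.mem_setOf_eq, and_iff_left_iff_imp]
      intro he
      exact G.not_isDiag_of_mem_edgeSet (SimpleGraph.mem_edgeFinset.mp (hTS he))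
    rw [degree_eq_ecnt, degree_eq_ecnt, hEF]
    exact hT v

theorem degree_sdiff_sup [Fintype V] (G H K : SimpleGraph V) (hHG : H ≤ G) (hKH : K ≤ H)
    (v : V) {i : Fintype (((G \ H) ⊔ K).neighborSet v)}
    [Fintype (G.neighborSet v)] [Fintype (H.neighborSet v)] [Fintype (K.neighborSet v)] :
    @SimpleGraph.degree V ((G \ H) ⊔ K) v i = G.degree v - H.degree v + K.degree v := by
  have hnb : @SimpleGraph.neighborFinset V ((G \ H) ⊔ K) v i
      = (G.neighborFinset v \ H.neighborFinset v) ∪ K.neighborFinset v := by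
    ext z
    simp only [SimpleGraph.mem_neighborFinset, SimpleGraph.sup_adj, SimpleGraph.sdiff_adj,
      Finset.mem_union, Finset.mem_sdiff]
  have hdisj : Disjoint (G.neighborFinset v \ H.neighborFinset v) (K.neighborFinset v) := by
    rw [Finset.disjoint_left]
    intro z hz hz4
    refine (Finset.mem_sdiff.mp hz).2 ?_
    rw [SimpleGraph.mem_neighborFinset] at hz4 ⊢
    exact hKH hz4
  have hsub : H.neighborFinset v ⊆ G.neighborFinset v := by
    intro z hz
    rw [SimpleGraph.mem_neighborFinset] at hz ⊢
    exact hHG hz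
  show (@SimpleGraph.neighborFinset V ((G \ H) ⊔ K) v i).card = _
  rw [hnb, Finset.card_union_of_disjoint hdisj, Finset.card_sdiff_of_subset hsub]
  rfl

theorem degree_mono [Fintype V] {G H : SimpleGraph V} (hHG : H ≤ G) (v : V)
    [Fintype (G.neighborSet v)] [Fintype (H.neighborSet v)] :
    H.degree v ≤ G.degree v := by
  refine Finset.card_le_card ?_
  intro z hz
  rw [SimpleGraph.mem_neighborFinset] at hz ⊢
  exact hHG hz

end Stmt1Helper

theorem stmt_1 {V : Type*} [Fintype V] (G1 : SimpleGraph V) :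
    ∃ G1' : SimpleGraph V, G1' ≤ G1 ∧
      ∀ v : V, (9 / 16 : ℝ) * (G1.degree v : ℝ) - 3 ≤ (G1'.degree v : ℝ) ∧
        (G1'.degree v : ℝ) ≤ (9 / 16 : ℝ) * (G1.degree v : ℝ) + 3 := by
  obtain ⟨H1, hH1le, hH1⟩ := Stmt1Helper.halfG G1
  obtain ⟨H2, hH2le, hH2⟩ := Stmt1Helper.halfG H1
  obtain ⟨H3, hH3le, hH3⟩ := Stmt1Helper.halfG H2
  obtain ⟨H4, hH4le, hH4⟩ := Stmt1Helper.halfG H3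
  have hH41 : H4 ≤ H1 := hH4le.trans (hH3le.trans hH2le)
  refine ⟨(G1 \ H1) ⊔ H4, sup_le sdiff_le (hH41.trans hH1le), ?_⟩
  intro v
  have hle1 : H1.degree v ≤ G1.degree v := Stmt1Helper.degree_mono hH1le v
  rw [Stmt1Helper.degree_sdiff_sup G1 H1 H4 hH1le hH41 v]
  push_cast [Nat.cast_sub hle1]
  have c1 : (2 : ℝ) * H1.degree v ≤ G1.degree v + 2 := by exact_mod_cast (hH1 v).1
  have c2 : (G1.degree v : ℝ) ≤ 2 * H1.degree v + 2 := by exact_mod_cast (hH1 v).2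
  have c3 : (2 : ℝ) * H2.degree v ≤ H1.degree v + 2 := by exact_mod_cast (hH2 v).1
  have c4 : (H1.degree v : ℝ) ≤ 2 * H2.degree v + 2 := by exact_mod_cast (hH2 v).2
  have c5 : (2 : ℝ) * H3.degree v ≤ H2.degree v + 2 := by exact_mod_cast (hH3 v).1
  have c6 : (H2.degree v : ℝ) ≤ 2 * H3.degree v + 2 := by exact_mod_cast (hH3 v).2
  have c7 : (2 : ℝ) * H4.degree v ≤ H3.degree v + 2 := by exact_mod_cast (hH4 v).1
  have c8 : (H3.degree v : ℝ) ≤ 2 * H4.degree v + 2 := by exact_mod_cast (hH4 v).2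
  constructor <;> linarith
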